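/- Let T = ⟨P, 𝒢, O⟩ be a plan-recognition theory with O pairwise distinct, P' the transformed domain with c(o_a) = c(a), and G ∈ 𝒢. Then G belongs to the optimal goal set 𝒢*_T if and only if there is an action sequence π' that is both an optimal plan for G in P' and an optimal plan for G' = G ∪ F_o in P', i.e., π' ∈ Π*_{P'}(G) ∩ Π*_{P'}(G'). -/

import Mathlib

/-- A STRIPS planning domain: fluents `F`, actions `A`, an initial state `I`,
and precondition/add/delete lists for each action.  A planning problem is
obtained by pairing a domain with a goal `G : Set F`. -/
structure Strips (F A : Type) where
  I : Set F
  pre : A → Set F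
  add : A → Set F
  del : A → Set F

namespace Strips

variable {F A : Type}

/-- The result of applying action `a` in state `s`: `(s \ Del(a)) ∪ Add(a)`. -/
def applyA (P : Strips F A) (s : Set F) (a : A) : Set F := (s \ P.del a) ∪ P.add a

/-- `Exec P s π t`: the action sequence `π` is applicable successively from
state `s` (each action's precondition holds when it is applied) and leads to
the state `t`. -/
inductive Exec (P : Strips F A) : Set F → List A → Set F → Prop
  | nil (s : Set F) : Exec P s [] s
  | cons {s t : Set F} {a : A} {π : List A} :
      P.pre a ⊆ s → Exec P (P.applyA s a) π t → Exec P s (a :: π) t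

/-- `π` is a plan for the goal `G` in the domain `P`: it is applicable
successively from the initial state and its final state contains `G`. -/
def IsPlan (P : Strips F A) (G : Set F) (π : List A) : Prop :=
  ∃ t, Exec P P.I π t ∧ G ⊆ t

/-- The cost of a plan: the sum of the costs of its actions. -/
def planCost (c : A → ℝ) (π : List A) : ℝ := (π.map c).sum

/-- An optimal plan for `G`: a plan for `G` of minimum cost among all plans for `G`. -/
def IsOptimalPlan (P : Strips F A) (c : A → ℝ) (G : Set F) (π : List A) : Prop :=
  P.IsPlan G π ∧ ∀ π', P.IsPlan G π' → planCost c π ≤ planCost c π'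

/-- `c*_P(G)`: the optimal (minimum) cost of achieving `G` in `P`. -/
noncomputable def cstar (P : Strips F A) (c : A → ℝ) (G : Set F) : ℝ :=
  sInf (planCost c '' {π | P.IsPlan G π})

/-- An action sequence `π` satisfies the observation sequence `O` iff there is a
strictly monotonic function `f` from observation indices into action indices
such that the `f j`-th action of `π` equals the `j`-th observation. -/
def Satisfies (π O : List A) : Prop :=
  ∃ f : Fin O.length → Fin π.length, StrictMono f ∧ ∀ j, π.get (f j) = O.get j

end Strips

/-- The transformed domain `P'` of a plan-recognition theory `⟨P, 𝒢, O⟩`: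
fluents `F' = F ⊕ Fin m` (the fluent `Sum.inr j` is `p_{o_j}`), actions
`A' = A ⊕ Fin m` (the action `Sum.inr j` is the new action `o_{o_j}`),
initial state `I' = I`.  The new action `o_{o_j}` has the same precondition,
add and delete lists as the observed action `o_j = O.get j`, except that
`p_{o_j}` is added to its add list and `p_{o_{j-1}}` (for the observation
immediately preceding `o_j` in `O`, if any, i.e. when `j > 0`) is added to its
precondition. -/
def Strips.transform (P : Strips F A) (O : List A) :
    Strips (F ⊕ Fin O.length) (A ⊕ Fin O.length) where
  I := Sum.inl '' P.I
  pre := fun x => match x with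
    | Sum.inl a => Sum.inl '' P.pre a
    | Sum.inr j => Sum.inl '' P.pre (O.get j) ∪
        {p | ∃ _ : 0 < (j : ℕ), p = Sum.inr
          (⟨(j : ℕ) - 1, Nat.lt_of_le_of_lt (Nat.sub_le _ _) j.isLt⟩ : Fin O.length)}
  add := fun x => match x with
    | Sum.inl a => Sum.inl '' P.add a
    | Sum.inr j => insert (Sum.inr j) (Sum.inl '' P.add (O.get j))
  del := fun x => match x with
    | Sum.inl a => Sum.inl '' P.del a
    | Sum.inr j => Sum.inl '' P.del (O.get j)

/-- The set `F_o` of new fluents `p_a`, `a ∈ O`, of the transformed domain. -/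
def obsFluents {F : Type} (O : List A) : Set (F ⊕ Fin O.length) := Set.range Sum.inr

/-- The transformed goal `G' = G ∪ F_o`. -/
def goalTransform {F : Type} (O : List A) (G : Set F) : Set (F ⊕ Fin O.length) :=
  Sum.inl '' G ∪ Set.range Sum.inr

/-- The cost function of the transformed domain: `c(o_a) = c(a)`. -/
def costTransform (c : A → ℝ) (O : List A) : A ⊕ Fin O.length → ℝ :=
  Sum.elim c (fun j => c (O.get j))

open List in
/-- `Satisfies` is sublist. -/
lemma satisfies_iff_sublist {A : Type} {π O : List A} :
    Strips.Satisfies π O ↔ O <+ π := by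
  rw [List.sublist_iff_exists_fin_orderEmbedding_get_eq]
  constructor
  · rintro ⟨f, hmono, hf⟩
    exact ⟨OrderEmbedding.ofStrictMono f hmono, fun j => (hf j).symm⟩
  · rintro ⟨f, hf⟩
    exact ⟨f, f.strictMono, fun j => (hf j).symm⟩

section Aux

open Strips List

variable {F A : Type}

/-- Strip an action of the transformed domain back to an action of `A`. -/
def stripAct (O : List A) : A ⊕ Fin O.length → A := Sum.elim id O.get

/-- The set of observation fluents with index `< k`. -/
def lowFl {F : Type} (O : List A) (k : ℕ) : Set (F ⊕ Fin O.length) :=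
  {x | ∃ i : Fin O.length, (i : ℕ) < k ∧ x = Sum.inr i}

/-- A state of the transformed domain: `F`-part `s`, together with the
observation fluents of index `< k`. -/
def st {F : Type} (O : List A) (k : ℕ) (s : Set F) : Set (F ⊕ Fin O.length) :=
  Sum.inl '' s ∪ lowFl O k

lemma st_zero (O : List A) (s : Set F) : st O 0 s = Sum.inl '' s := by
  simp [st, lowFl]

lemma lowFl_eq_of_le {O : List A} {k : ℕ} (h : O.length ≤ k) :
    lowFl (F := F) O k = lowFl O O.length := by
  ext x
  simp only [lowFl, Set.mem_setOf_eq]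
  constructor
  · rintro ⟨i, -, rfl⟩; exact ⟨i, i.isLt, rfl⟩
  · rintro ⟨i, -, rfl⟩; exact ⟨i, lt_of_lt_of_le i.isLt h, rfl⟩

lemma range_inr_subset_st (O : List A) (t : Set F) :
    Set.range (Sum.inr : Fin O.length → F ⊕ Fin O.length) ⊆ st O O.length t := by
  rintro x ⟨i, rfl⟩
  exact Or.inr ⟨i, i.isLt, rfl⟩

lemma inl_mem_st {O : List A} {k : ℕ} {s : Set F} {p : F} :
    Sum.inl p ∈ st O k s ↔ p ∈ s := by
  simp [st, lowFl]

lemma inr_mem_st {O : List A} {k : ℕ} {s : Set F} {i : Fin O.length} :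
    Sum.inr i ∈ st O k s ↔ (i : ℕ) < k := by
  simp only [st, lowFl, Set.mem_union, Set.mem_image, Set.mem_setOf_eq]
  constructor
  · rintro (⟨p, -, h⟩ | ⟨i', hi', h⟩)
    · exact absurd h (by simp)
    · obtain rfl : i' = i := Sum.inr_injective h.symm
      exact hi'
  · intro h
    exact Or.inr ⟨i, h, rfl⟩

lemma costTransform_eq (c : A → ℝ) (O : List A) :
    costTransform c O = c ∘ stripAct O := by
  funext x; cases x <;> rfl

lemma planCost_strip (c : A → ℝ) (O : List A) (π' : List (A ⊕ Fin O.length)) :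
    Strips.planCost (costTransform c O) π' = Strips.planCost c (π'.map (stripAct O)) := by
  simp [Strips.planCost, costTransform_eq, List.map_map]

lemma inl_mem_applyA {P : Strips F A} {O : List A} {s' : Set (F ⊕ Fin O.length)}
    {x : A ⊕ Fin O.length} {p : F} :
    Sum.inl p ∈ (P.transform O).applyA s' x ↔
      (Sum.inl p ∈ s' ∧ p ∉ P.del (stripAct O x)) ∨ p ∈ P.add (stripAct O x) := by
  cases x <;>
    simp [Strips.applyA, Strips.transform, stripAct, Sum.inl_injective.eq_iff]

lemma inr_mem_applyA {P : Strips F A} {O : List A} {s' : Set (F ⊕ Fin O.length)}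
    {x : A ⊕ Fin O.length} {i : Fin O.length} :
    Sum.inr i ∈ (P.transform O).applyA s' x ↔ Sum.inr i ∈ s' ∨ x = Sum.inr i := by
  cases x with
  | inl a => simp [Strips.applyA, Strips.transform]
  | inr j =>
      simp only [Strips.applyA, Strips.transform, Set.mem_union, Set.mem_diff,
        Set.mem_image, Set.mem_insert_iff, Sum.inr.injEq]
      constructor
      · rintro (⟨h, -⟩ | (h | ⟨p, -, h⟩))
        · exact Or.inl h
        · exact Or.inr (by rw [h])
        · exact absurd h (by simp)
      · rintro (h | h)
        · refine Or.inl ⟨h, ?_⟩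
          rintro ⟨p, -, hp⟩
          exact absurd hp (by simp)
        · exact Or.inr (Or.inl h.symm)

lemma preimage_applyA (P : Strips F A) (O : List A)
    (s' : Set (F ⊕ Fin O.length)) (x : A ⊕ Fin O.length) :
    Sum.inl ⁻¹' ((P.transform O).applyA s' x) = P.applyA (Sum.inl ⁻¹' s') (stripAct O x) := by
  ext p
  show Sum.inl p ∈ (P.transform O).applyA s' x ↔ _
  rw [inl_mem_applyA]
  simp [Strips.applyA]

lemma exec_proj {P : Strips F A} {O : List A}
    {s' t' : Set (F ⊕ Fin O.length)} {π' : List (A ⊕ Fin O.length)}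
    (h : Strips.Exec (P.transform O) s' π' t') :
    Strips.Exec P (Sum.inl ⁻¹' s') (π'.map (stripAct O)) (Sum.inl ⁻¹' t') := by
  induction h with
  | nil s => exact Strips.Exec.nil _
  | @cons s t x π hpre hexec ih =>
      refine Strips.Exec.cons ?_ ?_
      · cases x with
        | inl a => exact Set.image_subset_iff.mp hpre
        | inr j => exact Set.image_subset_iff.mp ((Set.union_subset_iff.mp hpre).1)
      · rw [← preimage_applyA]; exact ih

/-- Plans of the transformed domain project to plans of the original domain. -/
lemma proj_plan {P : Strips F A} {O : List A} {G : Set F}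
    {π' : List (A ⊕ Fin O.length)}
    (h : (P.transform O).IsPlan (Sum.inl '' G) π') :
    P.IsPlan G (π'.map (stripAct O)) := by
  obtain ⟨t', hexec, hsub⟩ := h
  have h1 : Sum.inl ⁻¹' ((P.transform O).I) = P.I := by
    show Sum.inl ⁻¹' (Sum.inl '' P.I) = P.I
    exact Set.preimage_image_eq _ Sum.inl_injective
  refine ⟨Sum.inl ⁻¹' t', ?_, Set.image_subset_iff.mp hsub⟩
  have := exec_proj hexec
  rwa [h1] at this

/-- Applying an original action in the transformed domain. -/
lemma applyA_st_inl (P : Strips F A) (O : List A) (k : ℕ) (s : Set F) (a : A) :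
    (P.transform O).applyA (st O k s) (Sum.inl a) = st O k (P.applyA s a) := by
  ext x
  cases x with
  | inl p =>
      rw [inl_mem_applyA, inl_mem_st, inl_mem_st]
      simp [Strips.applyA, stripAct]
  | inr i =>
      rw [inr_mem_applyA, inr_mem_st, inr_mem_st]
      simp

/-- Applying the `k`-th observation action in the transformed domain. -/
lemma applyA_st_inr (P : Strips F A) (O : List A) (s : Set F)
    (j : Fin O.length) :
    (P.transform O).applyA (st O (j : ℕ) s) (Sum.inr j)
      = st O ((j : ℕ) + 1) (P.applyA s (O.get j)) := by
  ext x
  cases x with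
  | inl p =>
      rw [inl_mem_applyA, inl_mem_st, inl_mem_st]
      simp [Strips.applyA, stripAct]
  | inr i =>
      rw [inr_mem_applyA, inr_mem_st, inr_mem_st]
      simp only [Sum.inr.injEq]
      constructor
      · rintro (h | h)
        · omega
        · obtain rfl : j = i := h
          omega
      · intro h
        rcases Nat.lt_succ_iff_lt_or_eq.mp h with h' | h'
        · exact Or.inl h'
        · exact Or.inr (Fin.ext h'.symm)

/-- Lifting a plan of `P` (with all-original actions) into the transformed domain. -/
lemma lift_inl {P : Strips F A} (O : List A) {s t : Set F} {π : List A}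
    (h : Strips.Exec P s π t) (k : ℕ) :
    Strips.Exec (P.transform O) (st O k s) (π.map Sum.inl) (st O k t) := by
  induction h generalizing k with
  | nil s => exact Strips.Exec.nil _
  | @cons s t a π hpre hexec ih =>
      refine Strips.Exec.cons ?_ ?_
      · exact (Set.image_mono hpre).trans Set.subset_union_left
      · rw [applyA_st_inl]; exact ih k

/-- Lifting a plan of `P` satisfying the observations into the transformed domain,
inserting the observation actions. -/
lemma lift_obs {P : Strips F A} {O : List A} :
    ∀ (π : List A) (k : ℕ) (s t : Set F), O.drop k <+ π →
      Strips.Exec P s π t →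
      ∃ π' : List (A ⊕ Fin O.length), π'.map (stripAct O) = π ∧
        Strips.Exec (P.transform O) (st O k s) π' (st O O.length t) := by
  intro π
  induction π with
  | nil =>
      intro k s t hsub hexec
      cases hexec
      have hk : O.length ≤ k := by
        have hlen := congrArg List.length (List.sublist_nil.mp hsub)
        simp at hlen
        omega
      refine ⟨[], rfl, ?_⟩
      have : st O k s = st O O.length s := by
        unfold st; rw [lowFl_eq_of_le hk]
      rw [this]
      exact Strips.Exec.nil _
  | cons a π ih =>
      intro k s t hsub hexec
      cases hexec with
      | cons hpre hexec2 =>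
        have inlCase : O.drop k <+ π →
            ∃ π' : List (A ⊕ Fin O.length), π'.map (stripAct O) = a :: π ∧
              Strips.Exec (P.transform O) (st O k s) π' (st O O.length t) := by
          intro hs
          obtain ⟨π', hstrip, hexec'⟩ := ih k (P.applyA s a) t hs hexec2
          refine ⟨Sum.inl a :: π', by rw [List.map_cons, hstrip]; rfl, ?_⟩
          refine Strips.Exec.cons ?_ ?_
          · exact (Set.image_mono hpre).trans Set.subset_union_left
          · rw [applyA_st_inl]; exact hexec'
        rcases List.sublist_cons_iff.mp hsub with hs | ⟨r, heq, hr⟩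
        · exact inlCase hs
        · have hk : k < O.length := by
            by_contra h
            rw [List.drop_eq_nil_of_le (le_of_not_gt h)] at heq
            exact absurd heq (by simp)
          rw [List.drop_eq_getElem_cons hk] at heq
          have ha : O[k] = a := (List.cons.injEq _ _ _ _ ▸ heq).1
          have hrr : O.drop (k + 1) = r := (List.cons.injEq _ _ _ _ ▸ heq).2
          rw [← hrr] at hr
          obtain ⟨π', hstrip, hexec'⟩ := ih (k + 1) (P.applyA s a) t hr hexec2
          refine ⟨Sum.inr (⟨k, hk⟩ : Fin O.length) :: π', ?_, ?_⟩
          · rw [List.map_cons, hstrip]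
            show O.get ⟨k, hk⟩ :: π = a :: π
            rw [List.get_eq_getElem]
            exact congrArg (· :: π) ha
          · refine Strips.Exec.cons ?_ ?_
            · show Sum.inl '' P.pre (O.get ⟨k, hk⟩) ∪ _ ⊆ st O k s
              refine Set.union_subset ?_ ?_
              · have hpa : P.pre (O.get ⟨k, hk⟩) = P.pre a := by
                  rw [List.get_eq_getElem]; exact congrArg P.pre ha
                rw [hpa]
                exact (Set.image_mono hpre).trans Set.subset_union_left
              · rintro x ⟨hpos, rfl⟩
                have hpos' : 0 < k := hpos
                refine Or.inr ⟨_, ?_, rfl⟩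
                show k - 1 < k
                omega
            · have happ := applyA_st_inr P O s (⟨k, hk⟩ : Fin O.length)
              rw [show ((⟨k, hk⟩ : Fin O.length) : ℕ) = k from rfl] at happ
              rw [happ]
              have hpa : P.applyA s (O.get ⟨k, hk⟩) = P.applyA s a := by
                rw [List.get_eq_getElem]; exact congrArg (P.applyA s) ha
              rw [hpa]
              exact hexec'

/-- Any execution of the transformed domain achieving all observation fluents
contains the observation actions, in order, as a sublist. -/
lemma obs_sublist {P : Strips F A} {O : List A}
    {s' t' : Set (F ⊕ Fin O.length)} {π' : List (A ⊕ Fin O.length)}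
    (h : Strips.Exec (P.transform O) s' π' t') :
    ∀ k : ℕ, (∀ i : Fin O.length, k ≤ (i : ℕ) → Sum.inr i ∉ s') →
      (∀ i : Fin O.length, k ≤ (i : ℕ) → Sum.inr i ∈ t') →
      ((List.finRange O.length).drop k).map Sum.inr <+ π' := by
  induction h with
  | nil s =>
      intro k h1 h2
      rcases le_or_gt O.length k with hk | hk
      · rw [List.drop_eq_nil_of_le (by simpa using hk)]
        exact List.nil_sublist _
      · exact absurd (h2 ⟨k, hk⟩ le_rfl) (h1 ⟨k, hk⟩ le_rfl)
  | @cons s t x π hpre hexec ih =>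
      intro k h1 h2
      cases x with
      | inl b =>
          refine (ih k ?_ h2).cons _
          intro i hi hmem
          rcases inr_mem_applyA.mp hmem with h | h
          · exact h1 i hi h
          · exact absurd h (by simp)
      | inr j =>
          have hjk : (j : ℕ) ≤ k := by
            rcases Nat.eq_zero_or_pos (j : ℕ) with h0 | h0
            · omega
            · have hmem : Sum.inr (⟨(j : ℕ) - 1,
                  Nat.lt_of_le_of_lt (Nat.sub_le _ _) j.isLt⟩ : Fin O.length) ∈ s :=
                hpre (Or.inr ⟨h0, rfl⟩)
              by_contra h
              exact h1 _ (by show k ≤ (j : ℕ) - 1; omega) hmem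
          rcases eq_or_lt_of_le hjk with hjk' | hjk'
          · -- j = k : consume this observation action
            have hk : k < O.length := hjk' ▸ j.isLt
            have hdrop : (List.finRange O.length).drop k
                = j :: (List.finRange O.length).drop (k + 1) := by
              rw [List.drop_eq_getElem_cons (by simpa using hk)]
              congr 1
              simp only [List.getElem_finRange, Fin.cast_mk]
              exact (Fin.ext hjk').symm
            rw [hdrop, List.map_cons]
            refine List.Sublist.cons₂ _ ?_
            refine ih (k + 1) ?_ (fun i hi => h2 i (by omega))
            intro i hi hmem
            rcases inr_mem_applyA.mp hmem with h | h
            · exact h1 i (by omega) h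
            · have hji : j = i := Sum.inr_injective h
              subst hji
              omega
          · refine (ih k ?_ h2).cons _
            intro i hi hmem
            rcases inr_mem_applyA.mp hmem with h | h
            · exact h1 i hi h
            · have hji : j = i := Sum.inr_injective h
              subst hji
              omega

end Aux

open List

/-- Theorem 1: let `T = ⟨P, 𝒢, O⟩` be a plan-recognition theory
with `O` pairwise distinct, `P' = P.transform O` the transformed domain with
cost `c(o_a) = c(a)`, and `G ∈ 𝒢`.  Then `G` belongs to the optimal goal set
`𝒢*_T` (i.e. some optimal plan for `G` in `P` satisfies `O`) iff there is an
action sequence `π'` that is both an optimal plan for `G` in `P'` and an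
optimal plan for `G' = G ∪ F_o` in `P'`, i.e.
`π' ∈ Π*_{P'}(G) ∩ Π*_{P'}(G')`. -/
theorem goal_in_optimal_set_iff_common_optimal_plan
    {F A : Type} [Finite F] [Finite A]
    (P : Strips F A) (𝒢 : Set (Set F)) (O : List A) (hO : O.Nodup)
    (c : A → ℝ) (hc : ∀ a, 0 ≤ c a)
    (G : Set F) (hG : G ∈ 𝒢) :
    (∃ π, P.IsOptimalPlan c G π ∧ Strips.Satisfies π O) ↔
      (∃ π' : List (A ⊕ Fin O.length),
        (P.transform O).IsOptimalPlan (costTransform c O) (Sum.inl '' G) π' ∧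
        (P.transform O).IsOptimalPlan (costTransform c O) (goalTransform O G) π') := by
  constructor
  · rintro ⟨π, ⟨⟨t, hexec, hGt⟩, hopt⟩, hsat⟩
    have hsubO : O <+ π := satisfies_iff_sublist.mp hsat
    obtain ⟨π', hstrip, hexec'⟩ := lift_obs π 0 P.I t (by simpa using hsubO) hexec
    rw [st_zero] at hexec'
    have hplan1 : (P.transform O).IsPlan (Sum.inl '' G) π' :=
      ⟨st O O.length t, hexec',
        (Set.image_mono hGt).trans Set.subset_union_left⟩
    have hplan2 : (P.transform O).IsPlan (goalTransform O G) π' :=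
      ⟨st O O.length t, hexec', Set.union_subset
        ((Set.image_mono hGt).trans Set.subset_union_left)
        (range_inr_subset_st O t)⟩
    have hcost : Strips.planCost (costTransform c O) π' = Strips.planCost c π := by
      rw [planCost_strip, hstrip]
    refine ⟨π', ⟨hplan1, ?_⟩, hplan2, ?_⟩
    · intro ρ' hρ'
      rw [hcost, planCost_strip]
      exact hopt _ (proj_plan hρ')
    · intro ρ' hρ'
      rw [hcost, planCost_strip]
      refine hopt _ (proj_plan ?_)
      obtain ⟨t', he, hs⟩ := hρ'
      exact ⟨t', he, fun x hx => hs (Set.mem_union_left _ hx)⟩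
  · rintro ⟨π', ⟨hplan1, hopt1⟩, hplan2, -⟩
    have hmapid : ∀ ρ : List A, (ρ.map Sum.inl).map (stripAct O) = ρ := by
      intro ρ
      rw [List.map_map]
      simp [stripAct, Function.comp]
    refine ⟨π'.map (stripAct O), ⟨proj_plan hplan1, ?_⟩, ?_⟩
    · intro ρ hρ
      obtain ⟨t, hexec, hGt⟩ := hρ
      have hlift := lift_inl O hexec 0
      rw [st_zero, st_zero] at hlift
      have hρ' : (P.transform O).IsPlan (Sum.inl '' G) (ρ.map Sum.inl) :=
        ⟨_, hlift, Set.image_mono hGt⟩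
      calc Strips.planCost c (π'.map (stripAct O))
          = Strips.planCost (costTransform c O) π' := (planCost_strip c O π').symm
        _ ≤ Strips.planCost (costTransform c O) (ρ.map Sum.inl) := hopt1 _ hρ'
        _ = Strips.planCost c ρ := by rw [planCost_strip, hmapid]
    · obtain ⟨t', hexec', hsub⟩ := hplan2
      have hnoinr : ∀ i : Fin O.length, (0 : ℕ) ≤ (i : ℕ) →
          Sum.inr i ∉ (P.transform O).I := by
        intro i _ h
        obtain ⟨p, -, hp⟩ := h
        exact absurd hp (by simp)
      have hall : ∀ i : Fin O.length, (0 : ℕ) ≤ (i : ℕ) → Sum.inr i ∈ t' :=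
        fun i _ => hsub (Set.mem_union_right _ ⟨i, rfl⟩)
      have hsl := obs_sublist hexec' 0 hnoinr hall
      rw [List.drop_zero] at hsl
      have hslm := hsl.map (stripAct O)
      rw [List.map_map] at hslm
      have hfr : (List.finRange O.length).map (stripAct O ∘ Sum.inr) = O :=
        List.map_get_finRange O
      rw [hfr] at hslm
      exact satisfies_iff_sublist.mpr hslm
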